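/- arXiv:2210.11700 — 5 statements merged into one kernel-verified Lean document; each statement's English description precedes it below -/
import Mathlib

section
/- Let G be a cyclic group generated by z of order n, and let i, k be integers with 1 ≤ i, k ≤ n−2. If the sets {z, z², …, z^k} and {z^i, z^{2i}, …, z^{ki}} are equal, then i = 1 (as an element of Z_n, i.e., z^i = z). -/
/-- The Cayley digraph relation of `G` with connection set `S`:
there is an arc from `x` to `y` iff `y = s * x` for some `s ∈ S`. -/
def cayRel {G : Type*} [Group G] (S : Set G) : G → G → Prop :=
  fun x y => y * x⁻¹ ∈ S

/-- The automorphism group of the Cayley digraph `Cay(G,S)`,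
as a subgroup of the permutations of the vertex set `G`. -/
def cayAut {G : Type*} [Group G] (S : Set G) : Subgroup (Equiv.Perm G) where
  carrier := {f | ∀ x y, cayRel S (f x) (f y) ↔ cayRel S x y}
  one_mem' := by intro x y; rfl
  mul_mem' := by
    intro f g hf hg x y
    rw [Equiv.Perm.mul_apply, Equiv.Perm.mul_apply, hf, hg]
  inv_mem' := by
    intro f hf x y
    simpa [Equiv.Perm.inv_def, Equiv.apply_symm_apply] using (hf (f⁻¹ x) (f⁻¹ y)).symm

/-- `Cay(G,S)` is a CI-digraph: any isomorphic Cayley digraph `Cay(G,T)`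
is Cayley isomorphic to it. -/
def IsCIDigraph {G : Type*} [Group G] (S : Set G) : Prop :=
  ∀ T : Set G, (1 : G) ∉ T → Nonempty (cayRel S ≃r cayRel T) →
    ∃ α : G ≃* G, α '' S = T

/-- `G` has the `m`-DCI property: every Cayley digraph of `G` of out-valency `m`
is a CI-digraph. -/
def HasDCI (G : Type*) [Group G] (m : ℕ) : Prop :=
  ∀ S : Set G, (1 : G) ∉ S → S.ncard = m → IsCIDigraph S

/-- The right regular representation `R(G)` as a subgroup of `Perm G`. -/
def rightReg (G : Type*) [Group G] : Subgroup (Equiv.Perm G) where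
  carrier := Set.range fun g : G => Equiv.mulRight g
  one_mem' := ⟨1, by ext x; simp⟩
  mul_mem' := by
    rintro _ _ ⟨g, rfl⟩ ⟨h, rfl⟩
    exact ⟨h * g, by ext x; simp [mul_assoc]⟩
  inv_mem' := by
    rintro _ ⟨g, rfl⟩
    exact ⟨g⁻¹, by ext x; simp [Equiv.Perm.inv_def]⟩

/-- A subgroup of permutations of `V` is regular if for all `x y : V` there is a
unique element sending `x` to `y`. -/
def IsRegularSubgroup {V : Type*} (H : Subgroup (Equiv.Perm V)) : Prop :=
  ∀ x y : V, ∃! h : H, (h : Equiv.Perm V) x = y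

/-- Counting elements `v ∈ [1,k]` with `(v+m) % n ∈ [1,k]`. -/
lemma natCard (n m k : ℕ) (hn : 3 ≤ n) (hm1 : 1 ≤ m) (hm2 : m ≤ n - 2)
    (hk1 : 1 ≤ k) (hk2 : k ≤ n - 2) :
    ((Finset.Icc 1 k).filter (fun v => 1 ≤ (v + m) % n ∧ (v + m) % n ≤ k)).card
      = (k - m) + (k + 1 - (n + 1 - m)) := by
  have hcongr : (Finset.Icc 1 k).filter (fun v => 1 ≤ (v + m) % n ∧ (v + m) % n ≤ k)
      = (Finset.Icc 1 k).filter (fun v => v + m ≤ k ∨ n + 1 ≤ v + m) := by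
    apply Finset.filter_congr
    intro v hv
    simp only [Finset.mem_Icc] at hv
    rcases lt_trichotomy (v + m) n with hlt | heq | hgt
    · rw [Nat.mod_eq_of_lt hlt]; omega
    · rw [heq, Nat.mod_self]; simp; omega
    · have h2n : v + m - n < n := by omega
      have : (v + m) % n = v + m - n := by
        rw [Nat.mod_eq_sub_mod (by omega), Nat.mod_eq_of_lt h2n]
      rw [this]; simp; omega
  rw [hcongr, Finset.filter_or, Finset.card_union_of_disjoint]
  · have h1 : (Finset.Icc 1 k).filter (fun v => v + m ≤ k) = Finset.Icc 1 (k - m) := by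
      ext v; simp only [Finset.mem_filter, Finset.mem_Icc]; omega
    have h2 : (Finset.Icc 1 k).filter (fun v => n + 1 ≤ v + m) = Finset.Icc (n + 1 - m) k := by
      ext v; simp only [Finset.mem_filter, Finset.mem_Icc]; omega
    rw [h1, h2, Nat.card_Icc, Nat.card_Icc]
    omega
  · rw [Finset.disjoint_left]
    intro v hv hv'
    simp only [Finset.mem_filter, Finset.mem_Icc] at hv hv'
    omega

/-- If `{z, z^2, …, z^k} = {z^i, z^{2i}, …, z^{ki}}` in a cyclic group
generated by `z` of order `n`, with `1 ≤ i, k ≤ n - 2`, then `z^i = z`. -/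

theorem stmt0 {G : Type*} [Group G] (z : G) (n : ℕ) (hzn : orderOf z = n)
    (hgen : ∀ g : G, g ∈ Subgroup.zpowers z)
    (i k : ℕ) (hi1 : 1 ≤ i) (hi2 : i ≤ n - 2) (hk1 : 1 ≤ k) (hk2 : k ≤ n - 2)
    (h : {g : G | ∃ j : ℕ, 1 ≤ j ∧ j ≤ k ∧ g = z ^ j} =
         {g : G | ∃ j : ℕ, 1 ≤ j ∧ j ≤ k ∧ g = z ^ (j * i)}) :
    z ^ i = z := by
  have hn : 3 ≤ n := by omega
  haveI : NeZero n := ⟨by omega⟩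
  set S : Finset (ZMod n) := (Finset.Icc 1 k).image (fun j : ℕ => (j : ZMod n)) with hSdef
  -- membership characterization
  have hmem : ∀ x : ZMod n, x ∈ S ↔ 1 ≤ x.val ∧ x.val ≤ k := by
    intro x
    constructor
    · rintro hx
      simp only [hSdef, Finset.mem_image, Finset.mem_Icc] at hx
      obtain ⟨j, ⟨hj1, hj2⟩, rfl⟩ := hx
      rw [ZMod.val_cast_of_lt (by omega)]
      exact ⟨hj1, hj2⟩
    · rintro ⟨h1, h2⟩
      simp only [hSdef, Finset.mem_image, Finset.mem_Icc]
      exact ⟨x.val, ⟨h1, h2⟩, by simp [ZMod.natCast_val, ZMod.cast_id]⟩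
  -- the set equality in ZMod n
  have hS : S.image (fun x => x * (i : ZMod n)) = S := by
    ext x
    simp only [Finset.mem_image, hSdef, Finset.mem_Icc]
    constructor
    · rintro ⟨y, ⟨j, ⟨hj1, hj2⟩, rfl⟩, rfl⟩
      have hmemR : z ^ (j * i) ∈ {g : G | ∃ j : ℕ, 1 ≤ j ∧ j ≤ k ∧ g = z ^ (j * i)} :=
        ⟨j, hj1, hj2, rfl⟩
      rw [← h] at hmemR
      obtain ⟨j', hj'1, hj'2, hj'⟩ := hmemR
      have : j * i ≡ j' [MOD n] := by
        rw [← hzn]; exact pow_eq_pow_iff_modEq.mp hj'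
      have hcast : ((j * i : ℕ) : ZMod n) = (j' : ZMod n) :=
        (ZMod.natCast_eq_natCast_iff _ _ _).mpr this
      refine ⟨j', ⟨hj'1, hj'2⟩, ?_⟩
      rw [← hcast]; push_cast; ring
    · rintro ⟨j', ⟨hj'1, hj'2⟩, rfl⟩
      have hmemL : z ^ j' ∈ {g : G | ∃ j : ℕ, 1 ≤ j ∧ j ≤ k ∧ g = z ^ j} :=
        ⟨j', hj'1, hj'2, rfl⟩
      rw [h] at hmemL
      obtain ⟨j, hj1, hj2, hj⟩ := hmemL
      have : j * i ≡ j' [MOD n] := by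
        rw [← hzn]; exact pow_eq_pow_iff_modEq.mp hj.symm
      have hcast : ((j * i : ℕ) : ZMod n) = (j' : ZMod n) :=
        (ZMod.natCast_eq_natCast_iff _ _ _).mpr this
      refine ⟨(j : ZMod n), ⟨j, ⟨hj1, hj2⟩, rfl⟩, ?_⟩
      rw [← hcast]; push_cast; ring
  have h1S : (1 : ZMod n) ∈ S := by
    rw [hmem]
    have : ((1 : ℕ) : ZMod n).val = 1 := ZMod.val_cast_of_lt (by omega)
    simp only [Nat.cast_one] at this
    omega
  -- i ≤ k
  have hiS : ((i : ZMod n)) ∈ S := by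
    rw [← hS]
    exact Finset.mem_image.mpr ⟨1, h1S, by ring⟩
  have hik : i ≤ k := by
    have := (hmem _).mp hiS
    rw [ZMod.val_cast_of_lt (by omega : i < n)] at this; exact this.2
  -- i is invertible
  have hiu : ∃ u : ZMod n, (i : ZMod n) * u = 1 := by
    have : (1 : ZMod n) ∈ S.image (fun x => x * (i : ZMod n)) := by rw [hS]; exact h1S
    obtain ⟨u, _, hu⟩ := Finset.mem_image.mp this
    exact ⟨u, by rw [mul_comm]; exact hu⟩
  obtain ⟨u, hu⟩ := hiu
  have cancel : ∀ a b : ZMod n, a * (i : ZMod n) = b * (i : ZMod n) → a = b := by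
    intro a b hab
    have := congrArg (fun x => x * u) hab
    simpa [mul_assoc, hu] using this
  -- bijection between distance-1 pairs and distance-i pairs
  have hbij : (S.filter (fun x => x + 1 ∈ S)).card
      = (S.filter (fun x => x + (i : ZMod n) ∈ S)).card := by
    apply Finset.card_bij (fun x _ => x * (i : ZMod n))
    · intro x hx
      simp only [Finset.mem_filter] at hx ⊢
      constructor
      · rw [← hS]; exact Finset.mem_image_of_mem _ hx.1
      · have : x * (i : ZMod n) + (i : ZMod n) = (x + 1) * (i : ZMod n) := by ring
        rw [this, ← hS]
        exact Finset.mem_image_of_mem _ hx.2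
    · intro a _ b _ hab
      exact cancel _ _ hab
    · intro y hy
      simp only [Finset.mem_filter] at hy
      obtain ⟨hy1, hy2⟩ := hy
      rw [← hS] at hy1
      obtain ⟨x, hx, rfl⟩ := Finset.mem_image.mp hy1
      refine ⟨x, ?_, rfl⟩
      simp only [Finset.mem_filter]
      refine ⟨hx, ?_⟩
      have heq : x * (i : ZMod n) + (i : ZMod n) = (x + 1) * (i : ZMod n) := by ring
      rw [heq, ← hS] at hy2
      obtain ⟨x', hx', hxx'⟩ := Finset.mem_image.mp hy2
      rwa [← cancel _ _ hxx']
  -- transfer cardinalities to ℕ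
  have cardval : ∀ m : ℕ, 1 ≤ m → m < n →
      (S.filter (fun x => x + (m : ZMod n) ∈ S)).card
        = ((Finset.Icc 1 k).filter (fun v => 1 ≤ (v + m) % n ∧ (v + m) % n ≤ k)).card := by
    intro m hm1 hmn
    apply Finset.card_bij (fun x _ => x.val)
    · intro x hx
      simp only [Finset.mem_filter] at hx
      obtain ⟨hx1, hx2⟩ := hx
      simp only [Finset.mem_filter, Finset.mem_Icc]
      have hv := (hmem x).mp hx1
      have hvm : (x + (m : ZMod n)).val = (x.val + m) % n := by
        rw [ZMod.val_add, ZMod.val_cast_of_lt hmn]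
      have := (hmem _).mp hx2
      rw [hvm] at this
      exact ⟨⟨hv.1, hv.2⟩, this⟩
    · intro a _ b _ hab
      exact ZMod.val_injective n hab
    · intro v hv
      simp only [Finset.mem_filter, Finset.mem_Icc] at hv
      obtain ⟨⟨hv1, hv2⟩, hv3, hv4⟩ := hv
      refine ⟨(v : ZMod n), ?_, ZMod.val_cast_of_lt (by omega)⟩
      simp only [Finset.mem_filter]
      constructor
      · rw [hmem, ZMod.val_cast_of_lt (by omega)]; exact ⟨hv1, hv2⟩
      · rw [hmem]
        have : ((v : ZMod n) + (m : ZMod n)).val = (v + m) % n := by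
          rw [ZMod.val_add, ZMod.val_cast_of_lt (by omega : v < n), ZMod.val_cast_of_lt hmn]
        rw [this]
        exact ⟨hv3, hv4⟩
  -- put it together
  have e1 := cardval 1 le_rfl (by omega)
  have ei := cardval i hi1 (by omega)
  have c1 := natCard n 1 k hn le_rfl (by omega) hk1 hk2
  have ci := natCard n i k hn hi1 hi2 hk1 hk2
  have hone : ((1:ℕ) : ZMod n) = (1 : ZMod n) := Nat.cast_one
  rw [hone] at e1
  have key : (k - i) + (k + 1 - (n + 1 - i)) = (k - 1) + (k + 1 - (n + 1 - 1)) := by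
    rw [← ci, ← ei, ← hbij, e1, c1]
  have : i = 1 := by omega
  rw [this, pow_one]
end

section
/- A Cayley digraph Cay(G, S) is a CI-digraph if and only if every regular subgroup of Aut(Cay(G, S)) that is isomorphic to G is conjugate in Aut(Cay(G, S)) to the right regular representation R(G). -/
theorem Equiv.Perm.apply_inv_self {α : Type*} (f : Equiv.Perm α) (x : α) : f (f⁻¹ x) = x :=
  f.apply_symm_apply x

theorem Equiv.Perm.inv_apply_self {α : Type*} (f : Equiv.Perm α) (x : α) : f⁻¹ (f x) = x :=
  f.symm_apply_apply x

section BabaiAux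

variable {G : Type*} [Group G]

lemma mem_cayAut_iff {S : Set G} {f : Equiv.Perm G} :
    f ∈ cayAut S ↔ ∀ x y, cayRel S (f x) (f y) ↔ cayRel S x y := Iff.rfl

lemma mem_rightReg_iff {f : Equiv.Perm G} :
    f ∈ rightReg G ↔ ∃ g : G, Equiv.mulRight g = f := Iff.rfl

lemma cayRel_mul_right (T : Set G) (a b g : G) :
    cayRel T (a * g) (b * g) ↔ cayRel T a b := by
  simp [cayRel, mul_inv_rev, mul_assoc]

end BabaiAux

/-- Babai's criterion: `Cay(G,S)` is a CI-digraph iff every regular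
subgroup of `Aut(Cay(G,S))` isomorphic to `G` is conjugate to `R(G)` in
`Aut(Cay(G,S))`. -/
theorem stmt3 {G : Type*} [Group G] [Finite G] (S : Set G) (hS : (1 : G) ∉ S) :
    IsCIDigraph S ↔
      ∀ R : Subgroup (Equiv.Perm G), R ≤ cayAut S → IsRegularSubgroup R →
        Nonempty (R ≃* G) →
        ∃ f ∈ cayAut S, R.map (MulAut.conj f).toMonoidHom = rightReg G := by
  constructor
  · -- forward direction
    intro hCI R hRle hreg hiso
    obtain ⟨φ0⟩ := hiso
    set φ : ↥R ≃* G := φ0 with hφ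
    -- evaluation at 1 is a bijection from R to G
    have hev : Function.Bijective (fun r : ↥R => (r : Equiv.Perm G) 1) := by
      constructor
      · intro r s hrs
        obtain ⟨h, -, hu⟩ := hreg 1 ((r : Equiv.Perm G) 1)
        exact (hu r rfl).trans (hu s hrs.symm).symm
      · intro y
        obtain ⟨h, hh, -⟩ := hreg 1 y
        exact ⟨h, hh⟩
    let evE : ↥R ≃ G := Equiv.ofBijective _ hev
    let μ : G ≃ G := (Equiv.inv G).trans (φ.symm.toEquiv.trans evE)
    have hμ : ∀ x : G, μ x = ((φ.symm x⁻¹ : ↥R) : Equiv.Perm G) 1 := fun x => rfl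
    have key : ∀ (r : ↥R) (y : G),
        (r : Equiv.Perm G) (μ y) = μ (y * (φ r)⁻¹) := by
      intro r y
      rw [hμ, hμ, mul_inv_rev, inv_inv, map_mul, MulEquiv.symm_apply_apply,
        Subgroup.coe_mul, Equiv.Perm.mul_apply]
    set T : Set G := {g | cayRel S (μ 1) (μ g)} with hTdef
    have hQ : ∀ x y : G, cayRel S (μ x) (μ y) ↔ cayRel T x y := by
      intro x y
      set r : ↥R := φ.symm x⁻¹ with hr
      have h1 : (r : Equiv.Perm G) (μ 1) = μ x := by
        rw [key r 1, hr, MulEquiv.apply_symm_apply, inv_inv, one_mul]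
      have h2 : (r : Equiv.Perm G) (μ (y * x⁻¹)) = μ y := by
        rw [key r (y * x⁻¹), hr, MulEquiv.apply_symm_apply, inv_inv, mul_assoc,
          inv_mul_cancel, mul_one]
      have hmem := hRle r.2
      have := (mem_cayAut_iff.1 hmem (μ 1) (μ (y * x⁻¹)))
      rw [h1, h2] at this
      exact this.trans Iff.rfl
    have h1T : (1 : G) ∉ T := by
      intro h
      have : cayRel S (μ 1) (μ 1) := h
      simp [cayRel] at this
      exact hS this
    have hrel : Nonempty (cayRel S ≃r cayRel T) := by
      refine ⟨⟨μ.symm, ?_⟩⟩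
      intro a b
      rw [← hQ (μ.symm a) (μ.symm b), Equiv.apply_symm_apply, Equiv.apply_symm_apply]
    obtain ⟨α, hα⟩ := hCI T h1T hrel
    set p : Equiv.Perm G := α.toEquiv.trans μ with hp
    have hpmem : p ∈ cayAut S := by
      intro x y
      show cayRel S (μ (α x)) (μ (α y)) ↔ cayRel S x y
      rw [hQ]
      show (α y) * (α x)⁻¹ ∈ T ↔ y * x⁻¹ ∈ S
      rw [← map_inv, ← map_mul, ← hα]
      exact α.injective.mem_set_image
    refine ⟨p⁻¹, inv_mem hpmem, ?_⟩
    have hconj : ∀ r : ↥R,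
        p⁻¹ * (r : Equiv.Perm G) * p = Equiv.mulRight (α.symm ((φ r)⁻¹)) := by
      intro r
      ext z
      rw [Equiv.Perm.mul_apply, Equiv.Perm.mul_apply]
      have hpz : p z = μ (α z) := rfl
      rw [hpz, key r (α z)]
      have : p (z * α.symm ((φ r)⁻¹)) = μ (α z * (φ r)⁻¹) := by
        show μ (α (z * α.symm ((φ r)⁻¹))) = μ (α z * (φ r)⁻¹)
        rw [map_mul, MulEquiv.apply_symm_apply]
      rw [← this, Equiv.Perm.inv_apply_self]
      rfl
    ext q
    simp only [Subgroup.mem_map, MulEquiv.coe_toMonoidHom, MulAut.conj_apply,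
      mem_rightReg_iff]
    constructor
    · rintro ⟨x, hx, rfl⟩
      exact ⟨α.symm ((φ ⟨x, hx⟩)⁻¹), by rw [← hconj ⟨x, hx⟩]; simp⟩
    · rintro ⟨g, rfl⟩
      refine ⟨(φ.symm ((α g)⁻¹) : ↥R), (φ.symm ((α g)⁻¹)).2, ?_⟩
      have := hconj (φ.symm ((α g)⁻¹))
      rw [MulEquiv.apply_symm_apply, inv_inv, MulEquiv.symm_apply_apply] at this
      simpa using this
  · -- backward direction
    intro h T hT hrel
    obtain ⟨e⟩ := hrel
    set eP : Equiv.Perm G := e.toEquiv with heP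
    have he : ∀ x y, cayRel T (eP x) (eP y) ↔ cayRel S x y := fun x y => e.map_rel_iff
    set R : Subgroup (Equiv.Perm G) :=
      (rightReg G).map (MulAut.conj eP⁻¹).toMonoidHom with hRdef
    have hmemR : ∀ q : Equiv.Perm G,
        q ∈ R ↔ ∃ g : G, eP⁻¹ * Equiv.mulRight g * eP = q := by
      intro q
      rw [hRdef, Subgroup.mem_map]
      constructor
      · rintro ⟨x, ⟨g, rfl⟩, rfl⟩
        exact ⟨g, by simp⟩
      · rintro ⟨g, rfl⟩
        exact ⟨Equiv.mulRight g, ⟨g, rfl⟩, by simp⟩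
    have hRle : R ≤ cayAut S := by
      intro q hq
      obtain ⟨g, rfl⟩ := (hmemR q).1 hq
      intro x y
      have hx : (eP⁻¹ * Equiv.mulRight g * eP) x = eP⁻¹ (eP x * g) := by
        simp [Equiv.Perm.mul_apply]
      have hy : (eP⁻¹ * Equiv.mulRight g * eP) y = eP⁻¹ (eP y * g) := by
        simp [Equiv.Perm.mul_apply]
      rw [hx, hy, ← he, Equiv.Perm.apply_inv_self, Equiv.Perm.apply_inv_self,
        cayRel_mul_right, he]
    have hreg : IsRegularSubgroup R := by
      intro x y
      have hmem : eP⁻¹ * Equiv.mulRight ((eP x)⁻¹ * eP y) * eP ∈ R :=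
        (hmemR _).2 ⟨_, rfl⟩
      refine ⟨⟨_, hmem⟩, ?_, ?_⟩
      · show (eP⁻¹ * Equiv.mulRight ((eP x)⁻¹ * eP y) * eP) x = y
        simp [Equiv.Perm.mul_apply]
      · rintro ⟨q, hq⟩ hqx
        obtain ⟨g, rfl⟩ := (hmemR q).1 hq
        have hqx' : eP⁻¹ (eP x * g) = y := by
          simpa [Equiv.Perm.mul_apply] using hqx
        have : eP x * g = eP y := by
          have := congrArg eP hqx'
          rwa [Equiv.Perm.apply_inv_self] at this
        have hg : g = (eP x)⁻¹ * eP y := by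
          rw [← this]; group
        subst hg
        rfl
    have hiso : Nonempty (↥R ≃* G) := by
      refine ⟨(MulEquiv.ofBijective
        ({ toFun := fun g => ⟨eP⁻¹ * Equiv.mulRight g⁻¹ * eP, (hmemR _).2 ⟨g⁻¹, rfl⟩⟩
           map_one' := by
             apply Subtype.ext
             simp
           map_mul' := by
             intro a b
             apply Subtype.ext
             show eP⁻¹ * Equiv.mulRight (a * b)⁻¹ * eP =
               (eP⁻¹ * Equiv.mulRight a⁻¹ * eP) * (eP⁻¹ * Equiv.mulRight b⁻¹ * eP)
             ext z
             simp [Equiv.Perm.mul_apply, mul_inv_rev, mul_assoc] } : G →* ↥R) ?_).symm⟩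
      constructor
      · intro a b hab
        have := congrArg (fun r : ↥R => (r : Equiv.Perm G) (eP⁻¹ 1)) hab
        simp only [Equiv.Perm.mul_apply, MonoidHom.coe_mk, OneHom.coe_mk,
          Equiv.Perm.apply_inv_self, Equiv.coe_mulRight] at this
        have := (eP⁻¹ : Equiv.Perm G).injective this
        exact inv_injective (mul_left_cancel this)
      · rintro ⟨q, hq⟩
        obtain ⟨g, rfl⟩ := (hmemR q).1 hq
        exact ⟨g⁻¹, by apply Subtype.ext; simp⟩
    obtain ⟨f, hf, hmap⟩ := h R hRle hreg hiso
    set c : Equiv.Perm G := eP * f⁻¹ with hc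
    have step : ∀ g : G, ∃ a : G, ∀ z : G, c (z * g) = c z * a := by
      intro g
      have hg : Equiv.mulRight g ∈ rightReg G := ⟨g, rfl⟩
      rw [← hmap, Subgroup.mem_map] at hg
      obtain ⟨r, hrR, hcj⟩ := hg
      obtain ⟨a, rfl⟩ := (hmemR r).1 hrR
      refine ⟨a, fun z => ?_⟩
      have h1 := DFunLike.congr_fun hcj z
      simp only [MulEquiv.coe_toMonoidHom, MulAut.conj_apply, Equiv.Perm.mul_apply,
        Equiv.coe_mulRight] at h1
      -- h1 : f (eP⁻¹ (eP (f⁻¹ z) * a)) = z * g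
      have h2 : c (z * g) = c (f (eP⁻¹ (eP (f⁻¹ z) * a))) := by rw [h1]
      rw [h2]
      simp [hc, Equiv.Perm.mul_apply, Equiv.Perm.inv_apply_self,
        Equiv.Perm.apply_inv_self]
    have key2 : ∀ g x : G, c (x * g) = c x * ((c 1)⁻¹ * c g) := by
      intro g x
      obtain ⟨a, ha⟩ := step g
      have h1 := ha 1
      rw [one_mul] at h1
      have : a = (c 1)⁻¹ * c g := by rw [h1]; group
      rw [ha x, this]
    have dbij : Function.Bijective (fun x : G => (c 1)⁻¹ * c x) := by
      constructor
      · intro a b hab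
        exact c.injective (mul_left_cancel hab)
      · intro y
        exact ⟨c⁻¹ (c 1 * y), by simp [Equiv.Perm.apply_inv_self]⟩
    let d : G ≃* G := MulEquiv.ofBijective
      ({ toFun := fun x => (c 1)⁻¹ * c x
         map_one' := inv_mul_cancel _
         map_mul' := by
           intro x y
           show (c 1)⁻¹ * c (x * y) = ((c 1)⁻¹ * c x) * ((c 1)⁻¹ * c y)
           rw [key2 y x, mul_assoc] } : G →* G) dbij
    refine ⟨d.trans (MulAut.conj (c 1)), ?_⟩
    have hβ : ∀ x : G, (d.trans (MulAut.conj (c 1))) x = c x * (c 1)⁻¹ := by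
      intro x
      show c 1 * ((c 1)⁻¹ * c x) * (c 1)⁻¹ = c x * (c 1)⁻¹
      group
    have hc_iso : ∀ x y, cayRel T (c x) (c y) ↔ cayRel S x y := by
      intro x y
      have hfx : ∀ z, c z = eP (f⁻¹ z) := fun z => rfl
      rw [hfx, hfx, he]
      exact (mem_cayAut_iff.1 (inv_mem hf)) x y
    have hmem : ∀ x : G, x ∈ S ↔ (d.trans (MulAut.conj (c 1))) x ∈ T := by
      intro x
      have h0 := hc_iso 1 x
      rw [hβ x]
      constructor
      · intro hx
        exact h0.2 (by simpa [cayRel] using hx)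
      · intro hx
        have : cayRel S 1 x := h0.1 hx
        simpa [cayRel] using this
    ext t
    constructor
    · rintro ⟨s, hs, rfl⟩
      exact (hmem s).1 hs
    · intro ht
      refine ⟨(d.trans (MulAut.conj (c 1))).symm t, (hmem _).2 ?_,
        (d.trans (MulAut.conj (c 1))).apply_symm_apply t⟩
      rwa [MulEquiv.apply_symm_apply]
end

section
/- Let G be a finite group with a normal subgroup H contained in a subgroup M of G. Let C ⊆ G \ H be a union of cosets of H in G, and let S_M, T_M ⊆ M \ {1} be such that S_M^α = T_M for some α ∈ Aut(M) which fixes every coset of H in M setwise. Then Cay(G, C ∪ S_M) ≅ Cay(G, C ∪ T_M). -/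
/-- If `H ⊴ G`, `H ≤ M ≤ G`, `C ⊆ G \\ H` is a union of cosets of `H`,
and `S_M, T_M ⊆ M \\ {1}` with `S_M^α = T_M` for some `α ∈ Aut(M)` fixing every
coset of `H` in `M`, then `Cay(G, C ∪ S_M) ≅ Cay(G, C ∪ T_M)`. -/
theorem stmt5 {G : Type*} [Group G] [Finite G] (H M : Subgroup G) [H.Normal]
    (hHM : H ≤ M) (C : Set G)
    (hCH : ∀ c ∈ C, c ∉ H)
    (hCcoset : ∀ c ∈ C, ∀ h ∈ H, h * c ∈ C)
    (SM TM : Set M) (hSM : (1 : M) ∉ SM) (hTM : (1 : M) ∉ TM)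
    (α : M ≃* M) (hα : α '' SM = TM)
    (hfix : ∀ m : M, ((α m : G)) * (m : G)⁻¹ ∈ H) :
    Nonempty (cayRel (C ∪ (Subtype.val '' SM)) ≃r cayRel (C ∪ (Subtype.val '' TM))) := by
  classical
  -- coset representative function for right cosets of M
  let r : G → G := fun g => (Quotient.mk (QuotientGroup.rightRel M) g).out
  have hr_mem : ∀ g : G, g * (r g)⁻¹ ∈ M := fun g =>
    (QuotientGroup.rightRel_apply).mp (Quotient.mk_out g)
  have hr_eq : ∀ x y : G, y * x⁻¹ ∈ M → r y = r x := by
    intro x y h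
    have : (Quotient.mk (QuotientGroup.rightRel M) y) =
        (Quotient.mk (QuotientGroup.rightRel M) x) :=
      Quotient.sound ((QuotientGroup.rightRel_apply).mpr (by simpa using M.inv_mem h))
    simp only [r, this]
  let m : G → M := fun g => ⟨g * (r g)⁻¹, hr_mem g⟩
  have hm : ∀ g : G, (m g : G) * r g = g := by
    intro g; simp [m]
  let φ : G → G := fun g => (α (m g) : G) * r g
  let ψ : G → G := fun g => (α.symm (m g) : G) * r g
  have hfix' : ∀ w : M, ((α.symm w : G)) * (w : G)⁻¹ ∈ H := by
    intro w
    have := hfix (α.symm w)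
    rw [α.apply_symm_apply] at this
    simpa using H.inv_mem this
  have hφr : ∀ g : G, r (φ g) = r g := by
    intro g
    apply hr_eq
    have : φ g * g⁻¹ = (α (m g) : G) * (m g : G)⁻¹ := by
      calc φ g * g⁻¹ = (α (m g) : G) * r g * ((m g : G) * r g)⁻¹ := by rw [hm g]
        _ = _ := by group
    rw [this]; exact hHM (hfix (m g))
  have hψr : ∀ g : G, r (ψ g) = r g := by
    intro g
    apply hr_eq
    have : ψ g * g⁻¹ = (α.symm (m g) : G) * (m g : G)⁻¹ := by
      calc ψ g * g⁻¹ = (α.symm (m g) : G) * r g * ((m g : G) * r g)⁻¹ := by rw [hm g]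
        _ = _ := by group
    rw [this]; exact hHM (hfix' (m g))
  have hφm : ∀ g : G, m (φ g) = α (m g) := by
    intro g
    apply Subtype.ext
    show φ g * (r (φ g))⁻¹ = _
    rw [hφr g]; simp [φ]
  have hψm : ∀ g : G, m (ψ g) = α.symm (m g) := by
    intro g
    apply Subtype.ext
    show ψ g * (r (ψ g))⁻¹ = _
    rw [hψr g]; simp [ψ]
  have hψφ : ∀ g : G, ψ (φ g) = g := by
    intro g
    show (α.symm (m (φ g)) : G) * r (φ g) = g
    rw [hφm, hφr, α.symm_apply_apply, hm]
  have hφψ : ∀ g : G, φ (ψ g) = g := by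
    intro g
    show (α (m (ψ g)) : G) * r (ψ g) = g
    rw [hψm, hψr, α.apply_symm_apply, hm]
  -- C is closed under left multiplication by H, as an iff
  have hC_iff : ∀ h ∈ H, ∀ g : G, g ∈ C ↔ h * g ∈ C := by
    intro h hh g
    constructor
    · intro hg; exact hCcoset g hg h hh
    · intro hg
      have := hCcoset _ hg h⁻¹ (H.inv_mem hh)
      simpa using this
  -- key: φ y * (φ x)⁻¹ = h * (y * x⁻¹) for some h ∈ H
  have key : ∀ x y : G, ∃ h ∈ H, φ y * (φ x)⁻¹ = h * (y * x⁻¹) := by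
    intro x y
    set z := y * x⁻¹ with hz
    refine ⟨(α (m y) : G) * (m y : G)⁻¹ * (z * ((α (m x) : G) * (m x : G)⁻¹)⁻¹ * z⁻¹), ?_, ?_⟩
    · exact H.mul_mem (hfix (m y))
        (Subgroup.Normal.conj_mem ‹H.Normal› _ (H.inv_mem (hfix (m x))) z)
    · have h1 : r y = (m y : G)⁻¹ * y := eq_inv_mul_of_mul_eq (hm y)
      have h2 : r x = (m x : G)⁻¹ * x := eq_inv_mul_of_mul_eq (hm x)
      show (α (m y) : G) * r y * ((α (m x) : G) * r x)⁻¹ = _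
      rw [h1, h2, hz]; group
  -- membership transfer
  have hSmem : ∀ w : M, (w : G) ∈ Subtype.val '' SM ↔ w ∈ SM := by
    intro w
    constructor
    · rintro ⟨u, hu, he⟩; rwa [Subtype.val_injective he] at hu
    · intro hw; exact ⟨w, hw, rfl⟩
  have hTmem : ∀ w : M, (w : G) ∈ Subtype.val '' TM ↔ w ∈ TM := by
    intro w
    constructor
    · rintro ⟨u, hu, he⟩; rwa [Subtype.val_injective he] at hu
    · intro hw; exact ⟨w, hw, rfl⟩
  have hST : ∀ w : M, w ∈ SM ↔ α w ∈ TM := by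
    intro w
    rw [← hα]
    exact ⟨fun h => ⟨w, h, rfl⟩, fun ⟨u, hu, he⟩ => by rwa [α.injective he] at hu⟩
  -- the main iff
  have main : ∀ x y : G, φ y * (φ x)⁻¹ ∈ C ∪ Subtype.val '' TM ↔
      y * x⁻¹ ∈ C ∪ Subtype.val '' SM := by
    intro x y
    obtain ⟨h, hh, heq⟩ := key x y
    by_cases hM : y * x⁻¹ ∈ M
    · -- same right coset of M
      have hrxy : r y = r x := hr_eq x y hM
      have hmm : (m y) * (m x)⁻¹ = (⟨y * x⁻¹, hM⟩ : M) := by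
        apply Subtype.ext
        show (y * (r y)⁻¹) * (x * (r x)⁻¹)⁻¹ = y * x⁻¹
        rw [hrxy]; group
      have heq2 : φ y * (φ x)⁻¹ = (α ⟨y * x⁻¹, hM⟩ : G) := by
        show (α (m y) : G) * r y * ((α (m x) : G) * r x)⁻¹ = _
        rw [hrxy, ← hmm, map_mul, map_inv]
        push_cast
        group
      rw [heq2]
      set w : M := ⟨y * x⁻¹, hM⟩
      have hCiff : (w : G) ∈ C ↔ (α w : G) ∈ C := by
        have : (α w : G) = ((α w : G) * (w : G)⁻¹) * (w : G) := by group
        rw [this]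
        exact hC_iff _ (hfix w) _
      constructor
      · rintro (h1 | h1)
        · exact Or.inl (hCiff.mpr h1)
        · exact Or.inr ((hSmem w).mpr ((hST w).mpr ((hTmem (α w)).mp h1)))
      · rintro (h1 | h1)
        · exact Or.inl (hCiff.mp h1)
        · exact Or.inr ((hTmem (α w)).mpr ((hST w).mp ((hSmem w).mp h1)))
    · -- different cosets: neither side can be in SM/TM
      have hnotM : φ y * (φ x)⁻¹ ∉ M := by
        rw [heq]
        intro hc
        exact hM (by simpa using M.mul_mem (M.inv_mem (hHM hh)) hc)
      have hCiff : y * x⁻¹ ∈ C ↔ φ y * (φ x)⁻¹ ∈ C := by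
        rw [heq]; exact hC_iff h hh _
      constructor
      · rintro (h1 | h1)
        · exact Or.inl (hCiff.mpr h1)
        · exact absurd (by obtain ⟨u, _, he⟩ := h1; rw [← he]; exact u.2) hnotM
      · rintro (h1 | h1)
        · exact Or.inl (hCiff.mp h1)
        · exact absurd (by obtain ⟨u, _, he⟩ := h1; rw [← he]; exact u.2) hM
  exact ⟨{ toFun := φ, invFun := ψ, left_inv := hψφ, right_inv := hφψ,
           map_rel_iff' := fun {x y} => main x y }⟩
end

section
/- Let n ≥ 4 be even and D_{2n} = ⟨a, b | a^n = b² = 1, a^b = a^{−1}⟩. Let H ⊆ ⟨a²⟩ and K ⊆ a⟨a²⟩ with H = H^{−1} and K = K^{−1}. Then Cay(D_{2n}, bH ∪ K) ≅ Cay(D_{2n}, bH ∪ bK). -/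
open DihedralGroup in
lemma aux_r_inv {n : ℕ} (i : ZMod n) : (r i)⁻¹ = r (-i) :=
  inv_eq_of_mul_eq_one_right (by rw [r_mul_r, add_neg_cancel, one_def])

open DihedralGroup in
lemma aux_sr_inv {n : ℕ} (i : ZMod n) : (sr i)⁻¹ = sr i :=
  inv_eq_of_mul_eq_one_right (sr_mul_self i)

open DihedralGroup in
lemma aux_r_pow {n : ℕ} (c : ZMod n) (m : ℕ) : (r c) ^ m = r (c * (m : ZMod n)) := by
  induction m with
  | zero => simp
  | succ k ih => rw [pow_succ, ih, r_mul_r]; push_cast; ring_nf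

open DihedralGroup in
lemma aux_r_zpow {n : ℕ} (c : ZMod n) (k : ℤ) : (r c) ^ k = r (c * ((k : ℤ) : ZMod n)) := by
  cases k with
  | ofNat m => rw [Int.ofNat_eq_coe, zpow_natCast, aux_r_pow]; push_cast; ring_nf
  | negSucc m =>
      rw [zpow_negSucc, aux_r_pow, aux_r_inv]
      congr 1
      push_cast
      ring

open DihedralGroup in
lemma aux_mem_zpowers {n : ℕ} {x : DihedralGroup n}
    (hx : x ∈ (Subgroup.zpowers (r (2 : ZMod n)) : Set (DihedralGroup n))) :
    ∃ c : ZMod n, x = r (2 * c) := by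
  obtain ⟨k, rfl⟩ := hx
  exact ⟨((k : ℤ) : ZMod n), aux_r_zpow 2 k⟩

open DihedralGroup in
/-- For `n ≥ 4` even, `H ⊆ ⟨a²⟩` and `K ⊆ a⟨a²⟩` inverse-closed,
`Cay(D_{2n}, bH ∪ K) ≅ Cay(D_{2n}, bH ∪ bK)`. -/
theorem stmt6 (n : ℕ) (hn : 4 ≤ n) (heven : Even n)
    (H K : Set (DihedralGroup n))
    (hH : H ⊆ (Subgroup.zpowers (DihedralGroup.r (2 : ZMod n)) : Set (DihedralGroup n)))
    (hK : K ⊆ (DihedralGroup.r (1 : ZMod n) * ·) ''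
          (Subgroup.zpowers (DihedralGroup.r (2 : ZMod n)) : Set (DihedralGroup n)))
    (hHinv : H⁻¹ = H) (hKinv : K⁻¹ = K) :
    Nonempty (cayRel ((DihedralGroup.sr (0 : ZMod n) * ·) '' H ∪ K) ≃r
      cayRel ((DihedralGroup.sr (0 : ZMod n) * ·) '' H ∪
              (DihedralGroup.sr (0 : ZMod n) * ·) '' K)) := by
  classical
  obtain ⟨m, hm⟩ := heven
  have h2 : (2:ℕ) ∣ n := ⟨m, by omega⟩
  set π : ZMod n →+* ZMod 2 := ZMod.castHom h2 (ZMod 2) with hπ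
  have hπ2 : π (2 : ZMod n) = 0 := by
    rw [show (2:ZMod n) = 1+1 by norm_num, map_add, map_one]; decide
  -- parity facts
  have hHpar : ∀ d : ZMod n, r d ∈ H → π d = 0 := by
    intro d hd
    obtain ⟨c, hc⟩ := aux_mem_zpowers (hH hd)
    rw [r.injEq] at hc
    rw [hc, map_mul, hπ2, zero_mul]
  have hKpar : ∀ d : ZMod n, r d ∈ K → π d = 1 := by
    intro d hd
    obtain ⟨y, hy, heq⟩ := hK hd
    obtain ⟨c, rfl⟩ := aux_mem_zpowers hy
    simp only [r_mul_r, r.injEq] at heq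
    rw [← heq, map_add, map_mul, hπ2, map_one, zero_mul, add_zero]
  -- H/K consist of rotations
  have hHrot : ∀ x ∈ H, ∃ d : ZMod n, x = r d := by
    intro x hx; obtain ⟨c, rfl⟩ := aux_mem_zpowers (hH hx); exact ⟨_, rfl⟩
  have hKrot : ∀ x ∈ K, ∃ d : ZMod n, x = r d := by
    intro x hx
    obtain ⟨y, hy, heq⟩ := hK hx
    obtain ⟨c, rfl⟩ := aux_mem_zpowers hy
    exact ⟨1 + 2*c, by rw [← heq]; simp [r_mul_r]⟩
  -- inverse closure in coordinates
  have hHneg : ∀ d : ZMod n, r d ∈ H → r (-d) ∈ H := by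
    intro d hd
    rw [← hHinv]
    exact Set.mem_inv.mpr (by rw [aux_r_inv, neg_neg]; exact hd)
  have hKneg : ∀ d : ZMod n, r d ∈ K → r (-d) ∈ K := by
    intro d hd
    rw [← hKinv]
    exact Set.mem_inv.mpr (by rw [aux_r_inv, neg_neg]; exact hd)
  have hHneg' : ∀ i j : ZMod n, r (i - j) ∈ H ↔ r (j - i) ∈ H := by
    intro i j
    constructor <;> intro h <;> simpa [neg_sub] using hHneg _ h
  have hKneg' : ∀ i j : ZMod n, r (i - j) ∈ K ↔ r (j - i) ∈ K := by
    intro i j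
    constructor <;> intro h <;> simpa [neg_sub] using hKneg _ h
  -- membership in b•H, b•K
  have mem_bS : ∀ (S : Set (DihedralGroup n)), (∀ x ∈ S, ∃ d : ZMod n, x = r d) →
      ∀ d : ZMod n, sr d ∈ (sr (0:ZMod n) * ·) '' S ↔ r d ∈ S := by
    intro S hSrot d
    constructor
    · rintro ⟨h, hh, heq⟩
      obtain ⟨c, rfl⟩ := hSrot h hh
      simp only [sr_mul_r, zero_add, sr.injEq] at heq
      rwa [heq] at hh
    · intro h
      exact ⟨r d, h, by simp [sr_mul_r]⟩
  have r_not_bS : ∀ (S : Set (DihedralGroup n)), (∀ x ∈ S, ∃ d : ZMod n, x = r d) →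
      ∀ d : ZMod n, r d ∉ (sr (0:ZMod n) * ·) '' S := by
    rintro S hSrot d ⟨h, hh, heq⟩
    obtain ⟨c, rfl⟩ := hSrot h hh
    simp only [sr_mul_r] at heq
    exact absurd heq (by simp)
  have sr_not_K : ∀ d : ZMod n, sr d ∉ K := by
    intro d hd
    obtain ⟨c, hc⟩ := hKrot _ hd
    exact absurd hc (by simp)
  -- arc characterizations
  set S : Set (DihedralGroup n) := (sr (0:ZMod n) * ·) '' H ∪ K with hS
  set T : Set (DihedralGroup n) :=
    (sr (0:ZMod n) * ·) '' H ∪ (sr (0:ZMod n) * ·) '' K with hT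
  have arcS_rr : ∀ i j : ZMod n, cayRel S (r i) (r j) ↔ r (j - i) ∈ K := by
    intro i j
    simp only [cayRel, hS, aux_r_inv, r_mul_r, ← sub_eq_add_neg, Set.mem_union]
    exact ⟨fun h => h.resolve_left (r_not_bS H hHrot _), Or.inr⟩
  have arcS_rs : ∀ i j : ZMod n, cayRel S (r i) (sr j) ↔ r (j - i) ∈ H := by
    intro i j
    simp only [cayRel, hS, aux_r_inv, sr_mul_r, ← sub_eq_add_neg, Set.mem_union]
    exact ⟨fun h => (mem_bS H hHrot _).mp (h.resolve_right (sr_not_K _)),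
      fun h => Or.inl ((mem_bS H hHrot _).mpr h)⟩
  have arcS_sr : ∀ i j : ZMod n, cayRel S (sr i) (r j) ↔ r (i - j) ∈ H := by
    intro i j
    simp only [cayRel, hS, aux_sr_inv, r_mul_sr, Set.mem_union]
    exact ⟨fun h => (mem_bS H hHrot _).mp (h.resolve_right (sr_not_K _)),
      fun h => Or.inl ((mem_bS H hHrot _).mpr h)⟩
  have arcS_ss : ∀ i j : ZMod n, cayRel S (sr i) (sr j) ↔ r (i - j) ∈ K := by
    intro i j
    simp only [cayRel, hS, aux_sr_inv, sr_mul_sr, Set.mem_union]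
    exact ⟨fun h => h.resolve_left (r_not_bS H hHrot _), Or.inr⟩
  have arcT_rr : ∀ i j : ZMod n, ¬ cayRel T (r i) (r j) := by
    intro i j h
    simp only [cayRel, hT, aux_r_inv, r_mul_r, Set.mem_union] at h
    exact h.elim (r_not_bS H hHrot _) (r_not_bS K hKrot _)
  have arcT_ss : ∀ i j : ZMod n, ¬ cayRel T (sr i) (sr j) := by
    intro i j h
    simp only [cayRel, hT, aux_sr_inv, sr_mul_sr, Set.mem_union] at h
    exact h.elim (r_not_bS H hHrot _) (r_not_bS K hKrot _)
  have arcT_rs : ∀ i j : ZMod n,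
      cayRel T (r i) (sr j) ↔ (r (j - i) ∈ H ∨ r (j - i) ∈ K) := by
    intro i j
    simp only [cayRel, hT, aux_r_inv, sr_mul_r, ← sub_eq_add_neg, Set.mem_union]
    rw [mem_bS H hHrot, mem_bS K hKrot]
  have arcT_sr : ∀ i j : ZMod n,
      cayRel T (sr i) (r j) ↔ (r (i - j) ∈ H ∨ r (i - j) ∈ K) := by
    intro i j
    simp only [cayRel, hT, aux_sr_inv, r_mul_sr, Set.mem_union]
    rw [mem_bS H hHrot, mem_bS K hKrot]
  -- parity reductions of disjunctions
  have key1 : ∀ d : ZMod n, π d ≠ 0 → ((r d ∈ H ∨ r d ∈ K) ↔ r d ∈ K) := by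
    intro d hd
    exact ⟨fun h => h.resolve_left (fun hh => hd (hHpar _ hh)), Or.inr⟩
  have key0 : ∀ d : ZMod n, π d = 0 → ((r d ∈ H ∨ r d ∈ K) ↔ r d ∈ H) := by
    intro d hd
    refine ⟨fun h => h.resolve_right (fun hh => ?_), Or.inl⟩
    rw [hKpar _ hh] at hd; exact one_ne_zero hd
  have notK0 : ∀ d : ZMod n, π d = 0 → r d ∉ K := by
    intro d hd hh; rw [hKpar _ hh] at hd; exact one_ne_zero hd
  have notH1 : ∀ d : ZMod n, π d ≠ 0 → r d ∉ H := by
    intro d hd hh; exact hd (hHpar _ hh)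
  -- ZMod 2 arithmetic
  have z2 : ∀ a b : ZMod 2, ¬ a = 0 → ¬ b = 0 → b - a = 0 := by decide
  have z2' : ∀ a b : ZMod 2, a = 0 → ¬ b = 0 → ¬ (b - a = 0) := by decide
  have z2'' : ∀ a b : ZMod 2, a = 0 → ¬ b = 0 → ¬ (a - b = 0) := by decide
  -- the flip map
  set φf : DihedralGroup n → DihedralGroup n := fun x =>
    match x with
    | .r i => if π i = 0 then .r i else .sr i
    | .sr i => if π i = 0 then .sr i else .r i
    with hφf
  have hinvol : Function.Involutive φf := by
    rintro (i | i) <;> by_cases hcond : π i = 0 <;> simp [hφf, hcond]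
  refine ⟨⟨hinvol.toPerm, ?_⟩⟩
  rintro (i | i) (j | j) <;>
    simp only [Function.Involutive.coe_toPerm, hφf]
  · -- r i, r j
    rw [arcS_rr]
    by_cases h1 : π i = 0 <;> by_cases h2 : π j = 0 <;> simp only [h1, h2, eq_self_iff_true, if_true, if_false]
    · rw [iff_false_intro (arcT_rr i j), false_iff]
      intro hk
      have := hKpar _ hk; rw [map_sub, h1, h2] at this; simp at this
    · rw [arcT_rs, key1 _ (by rw [map_sub, h1, sub_zero]; exact h2)]
    · rw [arcT_sr, key1 _ (by rw [map_sub, h2, sub_zero]; exact h1), hKneg']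
    · rw [iff_false_intro (arcT_ss i j), false_iff]
      intro hk
      have := hKpar _ hk; rw [map_sub, z2 _ _ h1 h2] at this; simp at this
  · -- r i, sr j
    rw [arcS_rs]
    by_cases h1 : π i = 0 <;> by_cases h2 : π j = 0 <;> simp only [h1, h2, eq_self_iff_true, if_true, if_false]
    · rw [arcT_rs, key0 _ (by rw [map_sub, h1, h2, sub_zero])]
    · rw [iff_false_intro (arcT_rr i j), false_iff]
      intro hk
      exact z2' _ _ h1 h2 (by have := hHpar _ hk; rwa [map_sub] at this)
    · rw [iff_false_intro (arcT_ss i j), false_iff]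
      intro hk
      have := hHpar _ hk; rw [map_sub, h2, zero_sub] at this
      exact h1 (by simpa [neg_eq_zero] using this)
    · rw [arcT_sr, key0 _ (by rw [map_sub, z2 _ _ h2 h1]), hHneg']
  · -- sr i, r j
    rw [arcS_sr]
    by_cases h1 : π i = 0 <;> by_cases h2 : π j = 0 <;> simp only [h1, h2, eq_self_iff_true, if_true, if_false]
    · rw [arcT_sr, key0 _ (by rw [map_sub, h1, h2, sub_zero])]
    · rw [iff_false_intro (arcT_ss i j), false_iff]
      intro hk
      exact z2' _ _ h1 h2 (by have := hHpar _ ((hHneg' i j).mp hk); rwa [map_sub] at this)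
    · rw [iff_false_intro (arcT_rr i j), false_iff]
      intro hk
      exact z2' _ _ h2 h1 (by have := hHpar _ hk; rwa [map_sub] at this)
    · rw [arcT_rs, key0 _ (by rw [map_sub, z2 _ _ h1 h2]), hHneg']
  · -- sr i, sr j
    rw [arcS_ss]
    by_cases h1 : π i = 0 <;> by_cases h2 : π j = 0 <;> simp only [h1, h2, eq_self_iff_true, if_true, if_false]
    · rw [iff_false_intro (arcT_ss i j), false_iff]
      intro hk
      have := hKpar _ hk; rw [map_sub, h1, h2] at this; simp at this
    · rw [arcT_sr, key1 _ (fun hh => z2'' _ _ h1 h2 (by rwa [map_sub] at hh))]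
    · rw [arcT_rs, key1 _ (fun hh => z2'' _ _ h2 h1 (by rwa [map_sub] at hh)), hKneg']
    · rw [iff_false_intro (arcT_rr i j), false_iff]
      intro hk
      have := hKpar _ hk; rw [map_sub, z2 _ _ h2 h1] at this; simp at this
end

section
/- Let n ≥ 4 be even, D_{2n} = ⟨a, b | a^n = b² = 1, a^b = a^{−1}⟩, H ⊆ ⟨a²⟩ and K ⊆ a⟨a²⟩ with H = H^{−1}, K = K^{−1}, and set S = bH ∪ K. If D_{2n} has the |S|-DCI property, then K = ∅. -/
namespace Stmt7Aux

open DihedralGroup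

variable {n : ℕ}

/-- The parity ring hom `ZMod n → ZMod 2` (for even `n`). -/
def cc (hd : 2 ∣ n) : ZMod n →+* ZMod 2 := ZMod.castHom hd (ZMod 2)

/-- Parity of a dihedral group element: the parity of its index. -/
def par (hd : 2 ∣ n) : DihedralGroup n → ZMod 2
  | r i => cc hd i
  | sr i => cc hd i

@[simp] lemma par_r (hd : 2 ∣ n) (i : ZMod n) : par hd (r i) = cc hd i := rfl
@[simp] lemma par_sr (hd : 2 ∣ n) (i : ZMod n) : par hd (sr i) = cc hd i := rfl

@[simp] lemma r_inv' (i : ZMod n) : (r i : DihedralGroup n)⁻¹ = r (-i) := rfl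
@[simp] lemma sr_inv' (i : ZMod n) : (sr i : DihedralGroup n)⁻¹ = sr i := rfl

/-- The candidate digraph isomorphism: identity on even elements,
left multiplication by `b = sr 0` on odd elements. -/
def phi (hd : 2 ∣ n) (x : DihedralGroup n) : DihedralGroup n :=
  if par hd x = 0 then x else sr 0 * x

lemma phi_invol (hd : 2 ∣ n) : Function.Involutive (phi hd) := by
  intro x
  rcases x with i | i <;> by_cases h : cc hd i = 0 <;>
    simp [phi, h, zero_add, sub_zero]

lemma r_pow (i : ZMod n) (m : ℕ) : (r i : DihedralGroup n) ^ m = r (m • i) := by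
  induction m with
  | zero => rw [pow_zero, zero_smul]; rfl
  | succ m ih => rw [pow_succ, ih, r_mul_r, succ_nsmul]

lemma r_zpow (i : ZMod n) (m : ℤ) : (r i : DihedralGroup n) ^ m = r (m • i) := by
  cases m with
  | ofNat k =>
      rw [Int.ofNat_eq_coe, zpow_natCast, r_pow, natCast_zsmul]
  | negSucc k =>
      rw [zpow_negSucc, r_pow, negSucc_zsmul, r_inv']

lemma zpowers_char (hd : 2 ∣ n) {x : DihedralGroup n}
    (hx : x ∈ Subgroup.zpowers (r (2 : ZMod n))) :
    ∃ i, x = r i ∧ cc hd i = 0 := by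
  obtain ⟨m, hm⟩ := Subgroup.mem_zpowers_iff.mp hx
  refine ⟨m • (2 : ZMod n), by rw [← hm, r_zpow], ?_⟩
  have h2 : cc hd (2 : ZMod n) = 0 := by
    have h22 : ((2 : ℕ) : ZMod n) = (2 : ZMod n) := by norm_num
    rw [← h22, map_natCast]
    decide
  rw [zsmul_eq_mul, map_mul, h2, mul_zero]

/-- The key digraph isomorphism `Cay(G, bH ∪ K) ≅ Cay(G, bH ∪ bK)`. -/
lemma key (hd : 2 ∣ n) (H K : Set (DihedralGroup n))
    (hHc : ∀ i, r i ∈ H → cc hd i = 0) (hKc : ∀ i, r i ∈ K → cc hd i ≠ 0)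
    (hHs : ∀ i : ZMod n, sr i ∉ H) (hKs : ∀ i : ZMod n, sr i ∉ K)
    (hHn : ∀ i, r i ∈ H ↔ r (-i) ∈ H) (hKn : ∀ i, r i ∈ K ↔ r (-i) ∈ K) :
    Nonempty (cayRel ((sr (0 : ZMod n) * ·) '' H ∪ K) ≃r
      cayRel ((sr (0 : ZMod n) * ·) '' H ∪ (sr (0 : ZMod n) * ·) '' K)) := by
  set S := (sr (0 : ZMod n) * ·) '' H ∪ K with hSdef
  set T := (sr (0 : ZMod n) * ·) '' H ∪ (sr (0 : ZMod n) * ·) '' K with hTdef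
  have rS : ∀ j, r j ∈ S ↔ r j ∈ K := by
    intro j
    constructor
    · rintro (⟨h, hh, he⟩ | hk)
      · rcases h with i | i
        · simp at he
        · exact absurd hh (hHs i)
      · exact hk
    · exact fun h => Or.inr h
  have srS : ∀ j, sr j ∈ S ↔ r j ∈ H := by
    intro j
    constructor
    · rintro (⟨h, hh, he⟩ | hk)
      · rcases h with i | i
        · simp only [sr_mul_r, zero_add, sr.injEq] at he
          subst he; exact hh
        · exact absurd hh (hHs i)
      · exact absurd hk (hKs j)
    · intro h
      exact Or.inl ⟨r j, h, by simp⟩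
  have rT : ∀ j, r j ∉ T := by
    intro j
    rintro (⟨h, hh, he⟩ | ⟨h, hh, he⟩) <;>
      rcases h with i | i <;>
        first
          | exact absurd hh (hHs i)
          | exact absurd hh (hKs i)
          | simp at he
  have srT : ∀ j, sr j ∈ T ↔ (r j ∈ H ∨ r j ∈ K) := by
    intro j
    constructor
    · rintro (⟨h, hh, he⟩ | ⟨h, hh, he⟩) <;> rcases h with i | i
      · simp only [sr_mul_r, zero_add, sr.injEq] at he
        subst he; exact Or.inl hh
      · exact absurd hh (hHs i)
      · simp only [sr_mul_r, zero_add, sr.injEq] at he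
        subst he; exact Or.inr hh
      · exact absurd hh (hKs i)
    · rintro (h | h)
      · exact Or.inl ⟨r j, h, by simp⟩
      · exact Or.inr ⟨r j, h, by simp⟩
  have psub : ∀ u v : ZMod n, cc hd (u - v) = cc hd u - cc hd v :=
    fun u v => map_sub _ u v
  have padd : ∀ u v : ZMod n, cc hd (u + -v) = cc hd u - cc hd v := by
    intro u v; rw [map_add, map_neg, ← sub_eq_add_neg]
  have two01 : ∀ x : ZMod 2, x ≠ 0 → x = 1 := by decide
  have notH : ∀ j, cc hd j ≠ 0 → r j ∉ H := fun j h hj => h (hHc j hj)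
  have notK : ∀ j, cc hd j = 0 → r j ∉ K := fun j h hj => hKc j hj h
  refine ⟨⟨Function.Involutive.toPerm _ (phi_invol hd), ?_⟩⟩
  intro x y
  show cayRel T (phi hd x) (phi hd y) ↔ cayRel S x y
  show phi hd y * (phi hd x)⁻¹ ∈ T ↔ y * x⁻¹ ∈ S
  rcases x with a | a <;> rcases y with b | b <;>
    by_cases ha : cc hd a = 0 <;> by_cases hb : cc hd b = 0 <;>
      simp only [phi, par_r, par_sr, ha, hb, if_true, if_false, if_pos, if_neg,
        not_false_iff, ite_true, ite_false, r_inv', sr_inv', r_mul_r, r_mul_sr,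
        sr_mul_r, sr_mul_sr, zero_add, sub_zero]
  -- x = r a, y = r b
  · -- parities (0,0)
    rw [rS]
    exact iff_of_false (rT _) (notK _ (by rw [padd, ha, hb]; decide))
  · -- (0,1) : here ha is about a? order: by_cases ha then hb: case1 ha true hb true done above;
    -- case2: ha true, hb false
    rw [srT, rS]
    exact or_iff_right (notH _ (by rw [padd, two01 _ hb, ha]; decide))
  · -- ha false, hb true
    rw [srT, rS]
    have h1 : r (a - b) ∉ H := notH _ (by rw [psub, two01 _ ha, hb]; decide)
    have h2 := hKn (a - b)
    rw [show -(a - b) = b + -a by ring] at h2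
    exact (or_iff_right h1).trans h2
  · -- ha false, hb false
    rw [rS]
    exact iff_of_false (rT _) (notK _ (by rw [padd, two01 _ ha, two01 _ hb]; decide))
  -- x = r a, y = sr b
  · rw [srT, srS]
    exact or_iff_left (notK _ (by rw [padd, ha, hb]; decide))
  · rw [srS]
    exact iff_of_false (rT _) (notH _ (by rw [padd, two01 _ hb, ha]; decide))
  · rw [srS]
    exact iff_of_false (rT _) (notH _ (by rw [padd, two01 _ ha, hb]; decide))
  · rw [srT, srS]
    have h1 : r (a - b) ∉ K := notK _ (by rw [psub, two01 _ ha, two01 _ hb]; decide)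
    have h2 := hHn (a - b)
    rw [show -(a - b) = b + -a by ring] at h2
    exact (or_iff_left h1).trans h2
  -- x = sr a, y = r b
  · rw [srT, srS]
    exact or_iff_left (notK _ (by rw [psub, ha, hb]; decide))
  · rw [srS]
    exact iff_of_false (rT _) (notH _ (by rw [psub, ha, two01 _ hb]; decide))
  · rw [srS]
    exact iff_of_false (rT _) (notH _ (by rw [psub, two01 _ ha, hb]; decide))
  · rw [srT, srS]
    have h1 : r (b + -a) ∉ K := notK _ (by rw [padd, two01 _ ha, two01 _ hb]; decide)
    have h2 := hHn (b + -a)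
    rw [show -(b + -a) = a - b by ring] at h2
    exact (or_iff_left h1).trans h2
  -- x = sr a, y = sr b
  · rw [rS]
    exact iff_of_false (rT _) (notK _ (by rw [psub, ha, hb]; decide))
  · rw [srT, rS]
    exact or_iff_right (notH _ (by rw [psub, ha, two01 _ hb]; decide))
  · rw [srT, rS]
    have h1 : r (b + -a) ∉ H := notH _ (by rw [padd, two01 _ ha, hb]; decide)
    have h2 := hKn (b + -a)
    rw [show -(b + -a) = a - b by ring] at h2
    exact (or_iff_right h1).trans h2
  · rw [rS]
    exact iff_of_false (rT _) (notK _ (by rw [psub, two01 _ ha, two01 _ hb]; decide))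

end Stmt7Aux

/-- For `n ≥ 4` even, `H ⊆ ⟨a²⟩`, `K ⊆ a⟨a²⟩` inverse-closed and
`S = bH ∪ K`, if `D_{2n}` has the `|S|`-DCI property then `K = ∅`. -/
theorem stmt7 (n : ℕ) (hn : 4 ≤ n) (heven : Even n)
    (H K : Set (DihedralGroup n))
    (hH : H ⊆ (Subgroup.zpowers (DihedralGroup.r (2 : ZMod n)) : Set (DihedralGroup n)))
    (hK : K ⊆ (DihedralGroup.r (1 : ZMod n) * ·) ''
          (Subgroup.zpowers (DihedralGroup.r (2 : ZMod n)) : Set (DihedralGroup n)))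
    (hHinv : H⁻¹ = H) (hKinv : K⁻¹ = K)
    (hDCI : HasDCI (DihedralGroup n)
      (((DihedralGroup.sr (0 : ZMod n) * ·) '' H ∪ K).ncard)) :
    K = ∅ := by
  classical
  open DihedralGroup Stmt7Aux in
  have hd : (2 : ℕ) ∣ n := heven.two_dvd
  have hnz : NeZero n := ⟨by omega⟩
  have hHr : ∀ g ∈ H, ∃ i, g = r i ∧ cc hd i = 0 := fun g hg => zpowers_char hd (hH hg)
  have hKr : ∀ g ∈ K, ∃ i, g = r i ∧ cc hd i ≠ 0 := by
    intro g hg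
    obtain ⟨y, hy, he⟩ := hK hg
    obtain ⟨j, rfl, hj⟩ := zpowers_char hd hy
    refine ⟨1 + j, by rw [← he]; rfl, ?_⟩
    rw [map_add, hj, map_one, add_zero]
    decide
  have hHc : ∀ i, r i ∈ H → cc hd i = 0 := by
    intro i hi
    obtain ⟨j, hj, hc⟩ := hHr _ hi
    injection hj with h
    rwa [h]
  have hKc : ∀ i, r i ∈ K → cc hd i ≠ 0 := by
    intro i hi
    obtain ⟨j, hj, hc⟩ := hKr _ hi
    injection hj with h
    rwa [h]
  have hHs : ∀ i : ZMod n, sr i ∉ H := by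
    intro i hi
    obtain ⟨j, hj, -⟩ := hHr _ hi
    cases hj
  have hKs : ∀ i : ZMod n, sr i ∉ K := by
    intro i hi
    obtain ⟨j, hj, -⟩ := hKr _ hi
    cases hj
  have hneg : ∀ (A : Set (DihedralGroup n)), A⁻¹ = A → ∀ i, r i ∈ A ↔ r (-i) ∈ A := by
    intro A hA i
    conv_rhs => rw [← hA]
    rw [Set.mem_inv, r_inv', neg_neg]
  have iso := key hd H K hHc hKc hHs hKs (hneg H hHinv) (hneg K hKinv)
  have h1S : (1 : DihedralGroup n) ∉ (sr (0 : ZMod n) * ·) '' H ∪ K := by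
    rintro (⟨g, hg, he⟩ | h1K)
    · obtain ⟨j, rfl, -⟩ := hHr g hg
      simp [one_def, -r_zero] at he
    · obtain ⟨j, hj, hc⟩ := hKr _ h1K
      rw [one_def] at hj
      injection hj with h
      rw [← h, map_zero] at hc
      exact hc rfl
  have h1T : (1 : DihedralGroup n) ∉
      (sr (0 : ZMod n) * ·) '' H ∪ (sr (0 : ZMod n) * ·) '' K := by
    rintro (⟨g, hg, he⟩ | ⟨g, hg, he⟩)
    · obtain ⟨j, rfl, -⟩ := hHr g hg
      simp [one_def, -r_zero] at he
    · obtain ⟨j, rfl, -⟩ := hKr g hg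
      simp [one_def, -r_zero] at he
  obtain ⟨α, hα⟩ := hDCI _ h1S rfl _ h1T iso
  rw [Set.eq_empty_iff_forall_notMem]
  intro k hk
  obtain ⟨i, rfl, hci⟩ := hKr k hk
  have hkS : r i ∈ (sr (0 : ZMod n) * ·) '' H ∪ K := Or.inr hk
  have hkT := hα ▸ Set.mem_image_of_mem α hkS
  have hrefl : ∃ j, α (r i) = sr j := by
    rcases hkT with ⟨g, hg, he⟩ | ⟨g, hg, he⟩
    · obtain ⟨j, rfl, -⟩ := hHr g hg
      exact ⟨0 + j, by rw [← he]; rfl⟩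
    · obtain ⟨j, rfl, -⟩ := hKr g hg
      exact ⟨0 + j, by rw [← he]; rfl⟩
  obtain ⟨j, hj⟩ := hrefl
  have hsq : r i * r i = 1 := by
    apply α.injective
    rw [map_mul, hj, sr_mul_sr, map_one, sub_self, one_def]
  rw [r_mul_r, one_def] at hsq
  injection hsq with hii
  have hni : -i = i := neg_eq_of_add_eq_zero_right hii
  have hcen : ∀ g : DihedralGroup n, r i * g = g * r i := by
    rintro (m | m)
    · rw [r_mul_r, r_mul_r, add_comm]
    · rw [r_mul_sr, sr_mul_r, sub_eq_add_neg, hni]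
  have hcomm : α (r i) * r 1 = r 1 * α (r i) := by
    have h := congrArg α (hcen (α.symm (r 1)))
    rwa [map_mul, map_mul, MulEquiv.apply_symm_apply] at h
  rw [hj, sr_mul_r, r_mul_sr] at hcomm
  injection hcomm with hc2
  have h20 : ((2 : ℕ) : ZMod n) = 0 := by
    push_cast
    linear_combination hc2
  rw [ZMod.natCast_eq_zero_iff] at h20
  have := Nat.le_of_dvd (by norm_num) h20
  omega
end
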